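/- In R-Wythoff, a position (a,b) with a ≤ b has Sprague–Grundy value 1 if and only if (a,b) ∈ B = {(2,2), (4,6)} ∪ {(⌊φn⌋ − 1, ⌊φn⌋ + n − 1) : n ≥ 1, n ≠ 2}, where φ = (1+√5)/2. -/

import Mathlib

noncomputable section

/-- The golden ratio. -/
def phi : ℝ := (1 + Real.sqrt 5) / 2

/-- Minimum excluded value of a set of naturals. -/
def mex (S : Set ℕ) : ℕ := sInf {n | n ∉ S}

/-- Sort a pair of naturals into nondecreasing order. -/
def sortPair (p : ℕ × ℕ) : ℕ × ℕ := (min p.1 p.2, max p.1 p.2)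

/-- Moves of R-Wythoff (positions are unordered pairs of pile sizes): remove a
positive number of tokens from the larger pile (either pile if equal), or an
equal positive number of tokens from both piles. -/
def RMove (p q : ℕ × ℕ) : Prop :=
  (∃ t < max p.1 p.2, sortPair q = sortPair (min p.1 p.2, t)) ∨
  (∃ k, 0 < k ∧ k ≤ min p.1 p.2 ∧ sortPair q = (min p.1 p.2 - k, max p.1 p.2 - k))

lemma RMove.sum_lt {p q : ℕ × ℕ} (h : RMove p q) : q.1 + q.2 < p.1 + p.2 := by
  rcases h with ⟨t, ht, hq⟩ | ⟨k, hk0, hk, hq⟩ <;>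
  · simp only [sortPair, Prod.mk.injEq] at hq
    omega

/-- Sprague–Grundy function of R-Wythoff. -/
noncomputable def grundyR : ℕ × ℕ → ℕ
  | p => mex {v | ∃ q, ∃ _ : RMove p q, grundyR q = v}
termination_by p => p.1 + p.2
decreasing_by exact RMove.sum_lt (by assumption)

/-- P-positions of R-Wythoff: a position is P iff every move leads to a
non-P (i.e. N) position. -/
def RPPos : ℕ × ℕ → Prop
  | p => ∀ q, RMove p q → ¬ RPPos q
termination_by p => p.1 + p.2
decreasing_by exact RMove.sum_lt (by assumption)


lemma sqrt5_sq : Real.sqrt 5 ^ 2 = 5 := Real.sq_sqrt (by norm_num)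
lemma sqrt5_nonneg : (0:ℝ) ≤ Real.sqrt 5 := Real.sqrt_nonneg 5
lemma sqrt5_gt : (11/5 : ℝ) < Real.sqrt 5 := by nlinarith [sqrt5_sq, sqrt5_nonneg]
lemma sqrt5_lt : Real.sqrt 5 < (9/4 : ℝ) := by nlinarith [sqrt5_sq, sqrt5_nonneg]
lemma one_lt_phi : (1:ℝ) < phi := by unfold phi; nlinarith [sqrt5_gt]
lemma phi_pos : (0:ℝ) < phi := lt_trans one_pos one_lt_phi
lemma phi_sq : phi ^ 2 = phi + 1 := by unfold phi; nlinarith [sqrt5_sq]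
lemma phi_irr : Irrational phi := by
  have h5 : Irrational (Real.sqrt 5) := by
    rw [show (5:ℝ) = ((5:ℕ):ℝ) by norm_num, irrational_sqrt_natCast_iff]
    rintro ⟨r, hr⟩
    rcases Nat.lt_or_ge r 3 with h | h
    · interval_cases r <;> omega
    · nlinarith
  have h1 : Irrational ((↑(1:ℕ) + Real.sqrt 5) / (↑(2:ℕ) : ℝ)) := (h5.natCast_add 1).div_natCast (by norm_num)
  have : phi = (↑(1:ℕ) + Real.sqrt 5) / (↑(2:ℕ) : ℝ) := by unfold phi; norm_num
  rwa [this]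

/-- the sequence A n = ⌊φ n⌋ -/
def Af (n : ℕ) : ℕ := ⌊phi * (n:ℝ)⌋₊

lemma Af_le (n : ℕ) : (Af n : ℝ) ≤ phi * n :=
  Nat.floor_le (mul_nonneg phi_pos.le (Nat.cast_nonneg n))
lemma lt_Af_add_one (n : ℕ) : phi * n < Af n + 1 := Nat.lt_floor_add_one _
lemma Af_strictMono : StrictMono Af := by
  apply strictMono_nat_of_lt_succ
  intro n
  have h1 : Af n + 1 ≤ Af (n+1) := Nat.le_floor (by push_cast; nlinarith [Af_le n, one_lt_phi])
  omega
lemma le_Af (n : ℕ) : n ≤ Af n :=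
  Nat.le_floor (by nlinarith [one_lt_phi, Nat.cast_nonneg (α := ℝ) n])
lemma Af_zero : Af 0 = 0 := by simp [Af]
lemma Af_val (n k : ℕ) (h1 : (k:ℝ) ≤ phi * n) (h2 : phi * n < k + 1) : Af n = k := by
  unfold Af; rw [Nat.floor_eq_iff (mul_nonneg phi_pos.le (Nat.cast_nonneg n))]; exact ⟨h1, h2⟩
lemma Af_one : Af 1 = 1 := Af_val 1 1 (by push_cast; unfold phi; nlinarith [sqrt5_gt]) (by push_cast; unfold phi; nlinarith [sqrt5_lt])
lemma Af_two : Af 2 = 3 := Af_val 2 3 (by push_cast; unfold phi; nlinarith [sqrt5_gt]) (by push_cast; unfold phi; nlinarith [sqrt5_lt])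
lemma Af_three : Af 3 = 4 := Af_val 3 4 (by push_cast; unfold phi; nlinarith [sqrt5_gt]) (by push_cast; unfold phi; nlinarith [sqrt5_lt])
lemma Af_four : Af 4 = 6 := Af_val 4 6 (by push_cast; unfold phi; nlinarith [sqrt5_gt]) (by push_cast; unfold phi; nlinarith [sqrt5_lt])
lemma Af_five : Af 5 = 8 := Af_val 5 8 (by push_cast; unfold phi; nlinarith [sqrt5_gt]) (by push_cast; unfold phi; nlinarith [sqrt5_lt])
lemma Af_inj {n m : ℕ} (h : Af n = Af m) : n = m := Af_strictMono.injective h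
lemma Af_lt_iff {n m : ℕ} : Af n < Af m ↔ n < m := Af_strictMono.lt_iff_lt

lemma intCast_Af (n : ℕ) : (Af n : ℤ) = ⌊(n:ℝ) * phi⌋ := by
  rw [mul_comm]; exact Int.natCast_floor_eq_floor (mul_nonneg phi_pos.le (Nat.cast_nonneg n))

lemma beatty_cases (m : ℕ) (hm : 0 < m) :
    ((∃ n, 0 < n ∧ Af n = m) ∧ ¬(∃ n, 0 < n ∧ Af n + n = m)) ∨
    ((∃ n, 0 < n ∧ Af n + n = m) ∧ ¬(∃ n, 0 < n ∧ Af n = m)) := by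
  have hconj : Real.HolderConjugate phi (phi + 1) := by
    refine Real.holderConjugate_iff.mpr ⟨?_, ?_⟩
    · exact one_lt_phi
    · have h0 : phi ≠ 0 := ne_of_gt phi_pos
      have h1 : phi + 1 ≠ 0 := ne_of_gt (by linarith [phi_pos])
      field_simp
      nlinarith [phi_sq]
  have hsym := phi_irr.beattySeq_symmDiff_beattySeq_pos hconj
  have hmem : (m:ℤ) ∈ {n : ℤ | 0 < n} := by simp; exact_mod_cast hm
  rw [← hsym, Set.mem_symmDiff] at hmem
  have e1 : (m:ℤ) ∈ {x | ∃ k > 0, beattySeq phi k = x} ↔ ∃ n, 0 < n ∧ Af n = m := by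
    constructor
    · rintro ⟨k, hk, hkm⟩
      refine ⟨k.toNat, by omega, ?_⟩
      have hkt : (k.toNat : ℤ) = k := Int.toNat_of_nonneg hk.le
      have : (Af k.toNat : ℤ) = m := by
        have hc : ((k.toNat:ℕ):ℝ) = ((k:ℤ):ℝ) := by exact_mod_cast congrArg (fun z : ℤ => (z:ℝ)) hkt
        rw [intCast_Af, ← hkm, beattySeq, hc]
      exact_mod_cast this
    · rintro ⟨n, hn, hnm⟩
      refine ⟨(n:ℤ), by exact_mod_cast hn, ?_⟩
      rw [beattySeq, show ((n:ℤ):ℝ) = (n:ℝ) by push_cast; ring, ← intCast_Af, hnm]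
  have e2 : (m:ℤ) ∈ {x | ∃ k > 0, beattySeq (phi+1) k = x} ↔ ∃ n, 0 < n ∧ Af n + n = m := by
    have key : ∀ k : ℤ, beattySeq (phi+1) k = ⌊(k:ℝ) * phi⌋ + k := by
      intro k
      rw [beattySeq, mul_add, mul_one, Int.floor_add_intCast]
    constructor
    · rintro ⟨k, hk, hkm⟩
      refine ⟨k.toNat, by omega, ?_⟩
      have hkt : (k.toNat : ℤ) = k := Int.toNat_of_nonneg hk.le
      have : ((Af k.toNat + k.toNat : ℕ) : ℤ) = m := by
        have hc : ((k.toNat:ℕ):ℝ) = ((k:ℤ):ℝ) := by exact_mod_cast congrArg (fun z : ℤ => (z:ℝ)) hkt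
        push_cast
        rw [intCast_Af, ← hkm, key, hkt, hc]
      exact_mod_cast this
    · rintro ⟨n, hn, hnm⟩
      refine ⟨(n:ℤ), by exact_mod_cast hn, ?_⟩
      rw [key, show ((n:ℤ):ℝ) = (n:ℝ) by push_cast; ring, ← intCast_Af, ← hnm]
      push_cast; ring
  rw [e1, e2] at hmem
  tauto

lemma mex_eq_zero {S : Set ℕ} (h : ∃ n, n ∉ S) : mex S = 0 ↔ 0 ∉ S := by
  unfold mex
  rw [Nat.sInf_eq_zero]
  constructor
  · rintro (h0 | he)
    · exact h0
    · obtain ⟨n, hn⟩ := h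
      exact absurd (Set.eq_empty_iff_forall_notMem.mp he n) (by simpa using hn)
  · intro h0; exact Or.inl h0

lemma mex_eq_one {S : Set ℕ} : mex S = 1 ↔ 0 ∈ S ∧ 1 ∉ S := by
  unfold mex
  constructor
  · intro h
    have hne : {n | n ∉ S}.Nonempty := by
      by_contra hc
      rw [Set.not_nonempty_iff_eq_empty] at hc
      rw [hc] at h; simp [Nat.sInf_empty] at h
    have h1 : 1 ∈ {n | n ∉ S} := h ▸ Nat.sInf_mem hne
    have h0 : 0 ∉ {n | n ∉ S} := by
      intro h0
      have := Nat.sInf_le h0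
      omega
    exact ⟨by simpa using h0, by simpa using h1⟩
  · rintro ⟨h0, h1⟩
    have hle := Nat.sInf_le (show 1 ∈ {n | n ∉ S} from h1)
    have : sInf {n | n ∉ S} ≠ 0 := by
      intro hc
      rcases Nat.sInf_eq_zero.mp hc with h | h
      · exact h h0
      · rw [Set.eq_empty_iff_forall_notMem] at h
        exact h 1 h1
    omega

lemma grundyR_eq (p : ℕ × ℕ) :
    grundyR p = mex {v | ∃ q, ∃ _ : RMove p q, grundyR q = v} := by
  rw [grundyR]

lemma grundy_le_sum (p : ℕ × ℕ) : grundyR p ≤ p.1 + p.2 := by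
  suffices H : ∀ s : ℕ, ∀ p : ℕ × ℕ, p.1 + p.2 = s → grundyR p ≤ s by
    exact le_of_le_of_eq (H _ p rfl) rfl
  intro s
  induction s using Nat.strong_induction_on with
  | _ s ih =>
    intro p hp
    rw [grundyR_eq]
    have hmem : (p.1 + p.2) ∈ {n | n ∉ {v | ∃ q, ∃ _ : RMove p q, grundyR q = v}} := by
      simp only [Set.mem_setOf_eq]
      rintro ⟨q, hq, hv⟩
      have h1 := RMove.sum_lt hq
      have h2 := ih (q.1 + q.2) (by omega) q rfl
      omega
    have := Nat.sInf_le hmem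
    unfold mex
    exact hp ▸ this

lemma grundy_exists_not_val (p : ℕ × ℕ) :
    ∃ n, n ∉ {v | ∃ q, ∃ _ : RMove p q, grundyR q = v} := by
  refine ⟨p.1 + p.2, ?_⟩
  rintro ⟨q, hq, hv⟩
  have h1 := RMove.sum_lt hq
  have h2 := grundy_le_sum q
  omega

lemma grundy_eq_zero_iff (p : ℕ × ℕ) :
    grundyR p = 0 ↔ ∀ q, RMove p q → grundyR q ≠ 0 := by
  rw [grundyR_eq, mex_eq_zero (grundy_exists_not_val p)]
  simp only [Set.mem_setOf_eq, not_exists]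

lemma grundy_eq_one_iff (p : ℕ × ℕ) :
    grundyR p = 1 ↔ (∃ q, RMove p q ∧ grundyR q = 0) ∧ ∀ q, RMove p q → grundyR q ≠ 1 := by
  rw [grundyR_eq, mex_eq_one]
  simp only [Set.mem_setOf_eq, not_exists, exists_prop]
  tauto

lemma RMove_symm_arg (x y : ℕ) (q : ℕ × ℕ) : RMove (x, y) q ↔ RMove (y, x) q := by
  unfold RMove
  rw [min_comm, max_comm]

lemma grundy_comm (x y : ℕ) : grundyR (x, y) = grundyR (y, x) := by
  rw [grundyR_eq, grundyR_eq]
  congr 1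
  ext v
  simp only [Set.mem_setOf_eq]
  constructor
  · rintro ⟨q, hq, hv⟩; exact ⟨q, (RMove_symm_arg x y q).mp hq, hv⟩
  · rintro ⟨q, hq, hv⟩; exact ⟨q, (RMove_symm_arg x y q).mpr hq, hv⟩

def MoveS (a b c d : ℕ) : Prop :=
  c ≤ d ∧ ((c = a ∧ d < b) ∨ (d = a ∧ c < a) ∨ (c < a ∧ a + d = c + b))

lemma sortPair_eq {x y : ℕ} (h : x ≤ y) : sortPair (x, y) = (x, y) := by
  unfold sortPair; simp [min_eq_left h, max_eq_right h]

lemma moveS_of {a b c d : ℕ} (hab : a ≤ b) (h : MoveS a b c d) : RMove (a, b) (c, d) := by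
  obtain ⟨hcd, hc⟩ := h
  have hmin : min (a, b).1 (a, b).2 = a := min_eq_left hab
  have hmax : max (a, b).1 (a, b).2 = b := max_eq_right hab
  rcases hc with ⟨h1, h2⟩ | ⟨h1, h2⟩ | ⟨h1, h2⟩
  · left
    refine ⟨d, by rw [hmax]; exact h2, ?_⟩
    rw [hmin, sortPair_eq hcd, sortPair_eq (h1 ▸ hcd), h1]
  · left
    refine ⟨c, by rw [hmax]; omega, ?_⟩
    rw [hmin, sortPair_eq hcd]
    unfold sortPair
    simp only [Prod.mk.injEq]
    omega
  · right
    refine ⟨a - c, by omega, by rw [hmin]; omega, ?_⟩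
    rw [hmin, hmax, sortPair_eq hcd]
    simp only [Prod.mk.injEq]
    omega

lemma moveS_to {a b : ℕ} (hab : a ≤ b) {q : ℕ × ℕ} (h : RMove (a, b) q) :
    MoveS a b (min q.1 q.2) (max q.1 q.2) := by
  have hmin : min (a, b).1 (a, b).2 = a := min_eq_left hab
  have hmax : max (a, b).1 (a, b).2 = b := max_eq_right hab
  rcases h with ⟨t, ht, hq⟩ | ⟨k, hk0, hk, hq⟩
  · rw [hmax] at ht
    rw [hmin] at hq
    unfold sortPair at hq
    simp only [Prod.mk.injEq] at hq
    refine ⟨?_, ?_⟩ <;> omega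
  · rw [hmin, hmax] at hq
    rw [hmin] at hk
    unfold sortPair at hq
    simp only [Prod.mk.injEq] at hq
    refine ⟨?_, ?_⟩ <;> omega

lemma grundy_sort (q : ℕ × ℕ) : grundyR q = grundyR (min q.1 q.2, max q.1 q.2) := by
  rcases le_total q.1 q.2 with h | h
  · rw [min_eq_left h, max_eq_right h]
  · rw [min_eq_right h, max_eq_left h, grundy_comm]

lemma Af_le_iff {n m : ℕ} : Af n ≤ Af m ↔ n ≤ m := Af_strictMono.le_iff_le
lemma Af_pos {n : ℕ} (hn : 0 < n) : 0 < Af n := lt_of_lt_of_le hn (le_Af n)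

lemma disjAB {n m : ℕ} (hn : 0 < n) (hm : 0 < m) : Af n ≠ Af m + m := by
  intro h
  have hpos : 0 < Af m + m := by omega
  rcases beatty_cases (Af m + m) hpos with ⟨h2, h3⟩ | ⟨h2, h3⟩
  · exact h3 ⟨m, hm, rfl⟩
  · exact h3 ⟨n, hn, h⟩

lemma cover (a : ℕ) (ha : 0 < a) :
    (∃ n, 0 < n ∧ Af n = a) ∨ (∃ n, 0 < n ∧ Af n + n = a) := by
  rcases beatty_cases a ha with ⟨h, _⟩ | ⟨h, _⟩
  · exact Or.inl h
  · exact Or.inr h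

lemma Af_ne_five (n : ℕ) : Af n ≠ 5 := by
  intro h
  have h3 : Af 3 < Af n := by rw [Af_three]; omega
  have h4 : Af n < Af 4 := by rw [Af_four]; omega
  rw [Af_lt_iff] at h3 h4
  omega

lemma Af_ne_seven (n : ℕ) : Af n ≠ 7 := by
  intro h
  have h3 : Af 4 < Af n := by rw [Af_four]; omega
  have h4 : Af n < Af 5 := by rw [Af_five]; omega
  rw [Af_lt_iff] at h3 h4
  omega

lemma AfB_ne_three {n : ℕ} (hn : 0 < n) : Af n + n ≠ 3 := by
  intro h
  rcases Nat.lt_or_ge n 2 with h2 | h2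
  · have : n = 1 := by omega
    subst this; rw [Af_one] at h; omega
  · have : Af 2 ≤ Af n := Af_le_iff.mpr h2
    rw [Af_two] at this; omega

lemma AfB_eq_five {n : ℕ} (hn : 0 < n) (h : Af n + n = 5) : n = 2 := by
  rcases Nat.lt_or_ge n 3 with h3 | h3
  · interval_cases n
    · rw [Af_one] at h; omega
    · rfl
  · have : Af 3 ≤ Af n := Af_le_iff.mpr h3
    rw [Af_three] at this; omega

def isP (a b : ℕ) : Prop := ∃ n, a = Af n ∧ b = Af n + n
def isB (a b : ℕ) : Prop := (a = 2 ∧ b = 2) ∨ (a = 4 ∧ b = 6) ∨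
  ∃ n, 0 < n ∧ n ≠ 2 ∧ a = Af n - 1 ∧ b = Af n + n - 1

lemma B_not_P {a b : ℕ} (hB : isB a b) : ¬ isP a b := by
  rintro ⟨m, rfl, rfl⟩
  rcases hB with ⟨h1, h2⟩ | ⟨h1, h2⟩ | ⟨n, hn, hn2, h1, h2⟩
  · have hm : m = 0 := by omega
    subst hm; rw [Af_zero] at h1; omega
  · have hm : m = 2 := by omega
    subst hm; rw [Af_two] at h1; omega
  · have hA := Af_pos hn
    have hmn : m = n := by omega
    subst hmn; omega

lemma P_no_move_P {a b c d : ℕ} (hP : isP a b) (hm : MoveS a b c d) (hP' : isP c d) :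
    False := by
  obtain ⟨n, rfl, rfl⟩ := hP
  obtain ⟨m, rfl, rfl⟩ := hP'
  obtain ⟨hcd, hcase⟩ := hm
  rcases hcase with ⟨h1, h2⟩ | ⟨h1, h2⟩ | ⟨h1, h2⟩
  · have := Af_inj h1; omega
  · rcases Nat.eq_zero_or_pos m with rfl | hm0
    · rw [Af_zero] at h1 h2; omega
    rcases Nat.eq_zero_or_pos n with rfl | hn0
    · rw [Af_zero] at h1
      have := le_Af m; omega
    · exact disjAB hn0 hm0 h1.symm
  · have hmn : m = n := by omega
    subst hmn; omega

lemma not_P_move_P {a b : ℕ} (hab : a ≤ b) (hP : ¬ isP a b) :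
    ∃ c d, MoveS a b c d ∧ isP c d := by
  rcases Nat.eq_zero_or_pos a with rfl | ha
  · have hb : 0 < b := by
      rcases Nat.eq_zero_or_pos b with rfl | h
      · exact absurd ⟨0, by rw [Af_zero], by rw [Af_zero]⟩ hP
      · exact h
    exact ⟨0, 0, ⟨le_refl 0, Or.inl ⟨rfl, hb⟩⟩, ⟨0, by rw [Af_zero], by rw [Af_zero]⟩⟩
  · rcases cover a ha with ⟨n, hn, hAn⟩ | ⟨m, hm, hBm⟩
    · rcases lt_trichotomy b (Af n + n) with hlt | heq | hgt
      · have hd0n : b - a < n := by omega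
        have hAd : Af (b - a) < Af n := Af_lt_iff.mpr hd0n
        exact ⟨Af (b - a), Af (b - a) + (b - a),
          ⟨by omega, Or.inr (Or.inr ⟨by omega, by omega⟩)⟩, ⟨b - a, rfl, rfl⟩⟩
      · exact absurd ⟨n, hAn.symm, by omega⟩ hP
      · exact ⟨a, Af n + n, ⟨by omega, Or.inl ⟨rfl, hgt⟩⟩, ⟨n, hAn.symm, by omega⟩⟩
    · have h1 : Af m < a := by
        have := le_Af m; omega
      exact ⟨Af m, a, ⟨h1.le, Or.inr (Or.inl ⟨rfl, h1⟩)⟩, ⟨m, rfl, by omega⟩⟩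

lemma B_no_move_B {a b c d : ℕ} (hB : isB a b) (hm : MoveS a b c d) (hB' : isB c d) :
    False := by
  obtain ⟨hcd, hcase⟩ := hm
  rcases hB with ⟨ha, hb⟩ | ⟨ha, hb⟩ | ⟨k, hk, hk2, ha, hb⟩
  · -- source (2,2)
    subst ha; subst hb
    rcases hB' with ⟨h1, h2⟩ | ⟨h1, h2⟩ | ⟨n, hn, hn2, h1, h2⟩
    · omega
    · omega
    · have hp := Af_pos hn
      have h3 := AfB_ne_three hn
      omega
  · -- source (4,6)
    subst ha; subst hb
    rcases hB' with ⟨h1, h2⟩ | ⟨h1, h2⟩ | ⟨n, hn, hn2, h1, h2⟩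
    · omega
    · omega
    · have hp := Af_pos hn
      rcases hcase with ⟨g1, g2⟩ | ⟨g1, g2⟩ | ⟨g1, g2⟩
      · exact Af_ne_five n (by omega)
      · have h5 : Af n + n = 5 := by omega
        exact hn2 (AfB_eq_five hn h5)
      · omega
  · -- source generic k
    have hpk := Af_pos hk
    rcases hB' with ⟨h1, h2⟩ | ⟨h1, h2⟩ | ⟨n, hn, hn2, h1, h2⟩
    · -- target (2,2)
      rcases hcase with ⟨g1, g2⟩ | ⟨g1, g2⟩ | ⟨g1, g2⟩
      · have h3 : Af k = 3 := by omega
        have := Af_inj (h3.trans Af_two.symm); omega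
      · have h3 : Af k = 3 := by omega
        have := Af_inj (h3.trans Af_two.symm); omega
      · omega
    · -- target (4,6)
      rcases hcase with ⟨g1, g2⟩ | ⟨g1, g2⟩ | ⟨g1, g2⟩
      · exact Af_ne_five k (by omega)
      · exact Af_ne_seven k (by omega)
      · omega
    · -- target generic n
      have hpn := Af_pos hn
      rcases hcase with ⟨g1, g2⟩ | ⟨g1, g2⟩ | ⟨g1, g2⟩
      · have h3 : Af n = Af k := by omega
        have := Af_inj h3; omega
      · have h3 : Af k = Af n + n := by omega
        exact disjAB hk hn h3
      · have h3 : n = k := by omega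
        subst h3
        omega

lemma notPB_move_B {a b : ℕ} (hab : a ≤ b) (hP : ¬ isP a b) (hB : ¬ isB a b) :
    ∃ c d, MoveS a b c d ∧ isB c d := by
  have hB01 : isB 0 1 := Or.inr (Or.inr ⟨1, one_pos, by omega, by rw [Af_one], by rw [Af_one]⟩)
  have hB22 : isB 2 2 := Or.inl ⟨rfl, rfl⟩
  have hB46 : isB 4 6 := Or.inr (Or.inl ⟨rfl, rfl⟩)
  rcases eq_or_lt_of_le hab with rfl | hlt
  · -- a = b
    rcases Nat.lt_or_ge a 3 with h3 | h3
    · interval_cases a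
      · exact absurd ⟨0, by rw [Af_zero], by rw [Af_zero]⟩ hP
      · exact ⟨0, 1, ⟨by omega, Or.inr (Or.inl ⟨rfl, by omega⟩)⟩, hB01⟩
      · exact absurd hB22 hB
    · exact ⟨2, 2, ⟨le_refl 2, Or.inr (Or.inr ⟨by omega, by omega⟩)⟩, hB22⟩
  · -- a < b
    rcases Nat.eq_zero_or_pos a with rfl | ha
    · rcases eq_or_lt_of_le (show 1 ≤ b by omega) with h1 | h1
      · exact absurd (show isB 0 b by rw [← h1]; exact hB01) hB
      · exact ⟨0, 1, ⟨by omega, Or.inl ⟨rfl, h1⟩⟩, hB01⟩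
    · rcases cover (a + 1) (by omega) with ⟨n, hn, hAn⟩ | ⟨m, hm, hBm⟩
      · -- a + 1 = Af n
        have hpn := Af_pos hn
        rcases lt_trichotomy b (Af n + n - 1) with hlt2 | heq | hgt
        · -- diagonal
          have hd0 : 0 < b - a := by omega
          have hd0n : b - a < n := by omega
          by_cases hd2 : b - a = 2
          · rcases eq_or_lt_of_le (show 3 ≤ n by omega) with h3 | h4
            · exfalso
              apply hP
              have h4 : Af n = 4 := by rw [← h3, Af_three]
              exact ⟨2, by rw [Af_two]; omega, by rw [Af_two]; omega⟩
            · have h5 : Af 4 ≤ Af n := Af_le_iff.mpr (by omega)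
              rw [Af_four] at h5
              exact ⟨4, 6, ⟨by omega, Or.inr (Or.inr ⟨by omega, by omega⟩)⟩, hB46⟩
          · have hAd : Af (b - a) < Af n := Af_lt_iff.mpr hd0n
            have hAdp : 0 < Af (b - a) := Af_pos hd0
            exact ⟨Af (b - a) - 1, Af (b - a) + (b - a) - 1,
              ⟨by omega, Or.inr (Or.inr ⟨by omega, by omega⟩)⟩,
              Or.inr (Or.inr ⟨b - a, hd0, hd2, rfl, rfl⟩)⟩
        · by_cases hn2 : n = 2
          · subst hn2
            rw [Af_two] at hAn heq
            exact ⟨2, 2, ⟨le_refl 2, Or.inl ⟨by omega, by omega⟩⟩, hB22⟩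
          · exact absurd (Or.inr (Or.inr ⟨n, hn, hn2, by omega, by omega⟩)) hB
        · by_cases hn2 : n = 2
          · subst hn2
            rw [Af_two] at hAn hgt
            exact ⟨2, 2, ⟨le_refl 2, Or.inl ⟨by omega, by omega⟩⟩, hB22⟩
          · exact ⟨a, Af n + n - 1, ⟨by omega, Or.inl ⟨rfl, by omega⟩⟩,
              Or.inr (Or.inr ⟨n, hn, hn2, by omega, rfl⟩)⟩
      · -- a + 1 = Af m + m
        by_cases hm2 : m = 2
        · subst hm2
          rw [Af_two] at hBm
          have ha4 : a = 4 := by omega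
          subst ha4
          have hb7 : b ≠ 7 := by
            intro h7
            exact hP ⟨3, by rw [Af_three], by rw [Af_three]; omega⟩
          rcases lt_trichotomy b 6 with h6 | h6 | h6
          · exact ⟨0, 1, ⟨by omega, Or.inr (Or.inr ⟨by omega, by omega⟩)⟩, hB01⟩
          · exact absurd (show isB 4 b by rw [h6]; exact hB46) hB
          · exact ⟨4, 6, ⟨by omega, Or.inl ⟨rfl, by omega⟩⟩, hB46⟩
        · have hpm := Af_pos hm
          exact ⟨Af m - 1, a, ⟨by omega, Or.inr (Or.inl ⟨rfl, by omega⟩)⟩,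
            Or.inr (Or.inr ⟨m, hm, hm2, rfl, by omega⟩)⟩

lemma main_induction (s : ℕ) : ∀ a b : ℕ, a ≤ b → a + b = s →
    (grundyR (a, b) = 0 ↔ isP a b) ∧ (grundyR (a, b) = 1 ↔ isB a b) := by
  induction s using Nat.strong_induction_on with
  | _ s ih =>
  intro a b hab hs
  have moveIH : ∀ c d : ℕ, MoveS a b c d →
      (grundyR (c, d) = 0 ↔ isP c d) ∧ (grundyR (c, d) = 1 ↔ isB c d) := by
    intro c d hm
    refine ih (c + d) ?_ c d hm.1 rfl
    obtain ⟨hcd, h⟩ := hm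
    omega
  constructor
  · rw [grundy_eq_zero_iff]
    constructor
    · intro h
      by_contra hP
      obtain ⟨c, d, hm, hPc⟩ := not_P_move_P hab hP
      exact h (c, d) (moveS_of hab hm) (((moveIH c d hm).1).mpr hPc)
    · intro hP q hq h0
      have hm := moveS_to hab hq
      have hg : grundyR (min q.1 q.2, max q.1 q.2) = 0 := by rw [← grundy_sort]; exact h0
      exact P_no_move_P hP hm (((moveIH _ _ hm).1).mp hg)
  · rw [grundy_eq_one_iff]
    constructor
    · rintro ⟨⟨q, hq, h0⟩, h1⟩
      have hm := moveS_to hab hq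
      have hg : grundyR (min q.1 q.2, max q.1 q.2) = 0 := by rw [← grundy_sort]; exact h0
      have hPq := ((moveIH _ _ hm).1).mp hg
      have hPab : ¬ isP a b := fun hP => P_no_move_P hP hm hPq
      by_contra hBab
      obtain ⟨c, d, hmc, hBc⟩ := notPB_move_B hab hPab hBab
      exact h1 (c, d) (moveS_of hab hmc) (((moveIH c d hmc).2).mpr hBc)
    · intro hBab
      have hPab := B_not_P hBab
      obtain ⟨c, d, hmc, hPc⟩ := not_P_move_P hab hPab
      refine ⟨⟨(c, d), moveS_of hab hmc, ((moveIH c d hmc).1).mpr hPc⟩, ?_⟩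
      intro q hq h1
      have hm := moveS_to hab hq
      have hg : grundyR (min q.1 q.2, max q.1 q.2) = 1 := by rw [← grundy_sort]; exact h1
      exact B_no_move_B hBab hm (((moveIH _ _ hm).2).mp hg)

/-- In R-Wythoff, `(a,b)` with `a ≤ b` has Sprague–Grundy value 1 iff it lies in
`B = {(2,2), (4,6)} ∪ {(⌊φn⌋ - 1, ⌊φn⌋ + n - 1) : n ≥ 1, n ≠ 2}`. -/
theorem RWythoff_grundy_value_one (a b : ℕ) (hab : a ≤ b) :
    grundyR (a, b) = 1 ↔
      ((a, b) = (2, 2) ∨ (a, b) = (4, 6) ∨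
        ∃ n : ℕ, 0 < n ∧ n ≠ 2 ∧
          (a, b) = (⌊phi * n⌋₊ - 1, ⌊phi * n⌋₊ + n - 1)) := by
  have h := (main_induction (a + b) a b hab rfl).2
  rw [h]
  unfold isB Af
  simp only [Prod.mk.injEq]

end
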